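/- arXiv:1402.6530 — 8 statements merged into one kernel-verified Lean document; each statement's English description precedes it below -/
import Mathlib

section
/- For a contraction T with constant L ∈ (0,1) on a closed convex subset C of a normed space, fixed point p, and the S-iteration a_{n+1} = (1-α_n) T a_n + α_n T b_n, b_n = (1-β_n) a_n + β_n T a_n with λ ≤ α_n, β_n < 1 for some λ > 0, one has ‖a_{n+1} - p‖ ≤ L(1 - λ²(1-L)) ‖a_n - p‖ for all n, and hence ‖a_n - p‖ ≤ [L(1 - λ²(1-L))]^{n-1} ‖a_1 - p‖. -/
open Filter

theorem s_iteration_contraction_rate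
    {E : Type*} [NormedAddCommGroup E] [NormedSpace ℝ E]
    (C : Set E) (hCne : C.Nonempty) (hCcl : IsClosed C) (hCcv : Convex ℝ C)
    (T : E → E) (hTmaps : Set.MapsTo T C C)
    (L : ℝ) (hL0 : 0 < L) (hL1 : L < 1)
    (hT : ∀ x ∈ C, ∀ y ∈ C, ‖T x - T y‖ ≤ L * ‖x - y‖)
    (p : E) (hpC : p ∈ C) (hp : T p = p)
    (lam : ℝ) (hlam : 0 < lam)
    (α β : ℕ → ℝ)
    (hα : ∀ n, lam ≤ α n ∧ α n < 1) (hβ : ∀ n, lam ≤ β n ∧ β n < 1)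
    (a b : ℕ → E) (ha0 : a 0 ∈ C)
    (hb : ∀ n, b n = (1 - β n) • a n + β n • T (a n))
    (ha : ∀ n, a (n + 1) = (1 - α n) • T (a n) + α n • T (b n)) :
    (∀ n, ‖a (n + 1) - p‖ ≤ L * (1 - lam ^ 2 * (1 - L)) * ‖a n - p‖) ∧
    (∀ n, ‖a n - p‖ ≤ (L * (1 - lam ^ 2 * (1 - L))) ^ n * ‖a 0 - p‖) := by
  have hlam1 : lam < 1 := lt_of_le_of_lt (hα 0).1 (hα 0).2
  -- membership
  have haC : ∀ n, a n ∈ C := by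
    intro n
    induction n with
    | zero => exact ha0
    | succ n ih =>
      have hbC : b n ∈ C := by
        rw [hb n]
        exact hCcv ih (hTmaps ih) (by linarith [(hβ n).2]) (by linarith [(hβ n).1, hlam]) (by ring)
      rw [ha n]
      exact hCcv (hTmaps ih) (hTmaps hbC)
        (by linarith [(hα n).2]) (by linarith [(hα n).1, hlam]) (by ring)
  have hbC : ∀ n, b n ∈ C := by
    intro n
    rw [hb n]
    exact hCcv (haC n) (hTmaps (haC n)) (by linarith [(hβ n).2]) (by linarith [(hβ n).1, hlam]) (by ring)
  have key : ∀ n, ‖a (n + 1) - p‖ ≤ L * (1 - lam ^ 2 * (1 - L)) * ‖a n - p‖ := by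
    intro n
    obtain ⟨hα1, hα2⟩ := hα n
    obtain ⟨hβ1, hβ2⟩ := hβ n
    have hαpos : 0 < α n := lt_of_lt_of_le hlam hα1
    have hβpos : 0 < β n := lt_of_lt_of_le hlam hβ1
    have hTa := hT (a n) (haC n) p hpC
    have hTb := hT (b n) (hbC n) p hpC
    have hbp : ‖b n - p‖ ≤ (1 - β n * (1 - L)) * ‖a n - p‖ := by
      have : b n - p = (1 - β n) • (a n - p) + β n • (T (a n) - T p) := by
        rw [hb n, hp]; module
      calc ‖b n - p‖ ≤ ‖(1 - β n) • (a n - p)‖ + ‖β n • (T (a n) - T p)‖ := by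
            rw [this]; exact norm_add_le _ _
        _ = (1 - β n) * ‖a n - p‖ + β n * ‖T (a n) - T p‖ := by
            rw [norm_smul, norm_smul, Real.norm_eq_abs, Real.norm_eq_abs,
              abs_of_nonneg (by linarith), abs_of_nonneg (by linarith)]
        _ ≤ (1 - β n) * ‖a n - p‖ + β n * (L * ‖a n - p‖) := by
            nlinarith [mul_le_mul_of_nonneg_left hTa hβpos.le]
        _ = (1 - β n * (1 - L)) * ‖a n - p‖ := by ring
    have hap : a (n + 1) - p = (1 - α n) • (T (a n) - T p) + α n • (T (b n) - T p) := by
      rw [ha n, hp]; module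
    have h1 : ‖a (n + 1) - p‖ ≤ (1 - α n) * ‖T (a n) - T p‖ + α n * ‖T (b n) - T p‖ := by
      rw [hap]
      calc _ ≤ ‖(1 - α n) • (T (a n) - T p)‖ + ‖α n • (T (b n) - T p)‖ := norm_add_le _ _
        _ = _ := by
          rw [norm_smul, norm_smul, Real.norm_eq_abs, Real.norm_eq_abs,
            abs_of_nonneg (by linarith), abs_of_nonneg (by linarith)]
    have hnn : (0:ℝ) ≤ ‖a n - p‖ := norm_nonneg _
    have h2 : ‖a (n + 1) - p‖ ≤ L * (1 - α n * β n * (1 - L)) * ‖a n - p‖ := by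
      nlinarith [mul_le_mul_of_nonneg_left hTa (by linarith : (0:ℝ) ≤ 1 - α n),
        mul_le_mul_of_nonneg_left hTb hαpos.le,
        mul_le_mul_of_nonneg_left hbp (mul_pos hαpos hL0).le]
    have h3 : L * (1 - α n * β n * (1 - L)) * ‖a n - p‖
        ≤ L * (1 - lam ^ 2 * (1 - L)) * ‖a n - p‖ := by
      have h4 : lam ^ 2 ≤ α n * β n := by nlinarith
      nlinarith [mul_nonneg (mul_nonneg (mul_nonneg hL0.le (sub_nonneg.2 h4))
        (by linarith : (0:ℝ) ≤ 1 - L)) hnn]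
    linarith
  refine ⟨key, ?_⟩
  intro n
  induction n with
  | zero => simp
  | succ n ih =>
    have hpos : 0 ≤ L * (1 - lam ^ 2 * (1 - L)) := by
      have h5 : (0:ℝ) ≤ 1 - lam ^ 2 := by nlinarith
      nlinarith [mul_nonneg h5 (by linarith : (0:ℝ) ≤ 1 - L)]
    calc ‖a (n + 1) - p‖ ≤ L * (1 - lam ^ 2 * (1 - L)) * ‖a n - p‖ := key n
      _ ≤ L * (1 - lam ^ 2 * (1 - L)) * ((L * (1 - lam ^ 2 * (1 - L))) ^ n * ‖a 0 - p‖) := by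
          exact mul_le_mul_of_nonneg_left ih hpos
      _ = (L * (1 - lam ^ 2 * (1 - L))) ^ (n + 1) * ‖a 0 - p‖ := by ring
end

section
/- For a contraction T with constant L ∈ (0,1) and the normal S-iteration t_{n+1} = T((1-α_n) t_n + α_n T t_n) with α_n ≥ λ > 0, one has ‖t_{n+1} - p‖ ≤ L(1 - (1-L)λ) ‖t_n - p‖ for each fixed point p, and hence ‖t_n - p‖ ≤ [L(1 - (1-L)λ)]^{n-1} ‖t_1 - p‖. -/
open Filter

theorem normal_s_iteration_contraction_rate
    {E : Type*} [NormedAddCommGroup E] [NormedSpace ℝ E]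
    (C : Set E) (hCne : C.Nonempty) (hCcl : IsClosed C) (hCcv : Convex ℝ C)
    (T : E → E) (hTmaps : Set.MapsTo T C C)
    (L : ℝ) (hL0 : 0 < L) (hL1 : L < 1)
    (hT : ∀ x ∈ C, ∀ y ∈ C, ‖T x - T y‖ ≤ L * ‖x - y‖)
    (p : E) (hpC : p ∈ C) (hp : T p = p)
    (lam : ℝ) (hlam : 0 < lam)
    (α : ℕ → ℝ) (hα : ∀ n, lam ≤ α n ∧ α n < 1)
    (t : ℕ → E) (ht0 : t 0 ∈ C)
    (ht : ∀ n, t (n + 1) = T ((1 - α n) • t n + α n • T (t n))) :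
    (∀ n, ‖t (n + 1) - p‖ ≤ L * (1 - (1 - L) * lam) * ‖t n - p‖) ∧
    (∀ n, ‖t n - p‖ ≤ (L * (1 - (1 - L) * lam)) ^ n * ‖t 0 - p‖) := by
  have hαpos : ∀ n, 0 < α n := fun n => lt_of_lt_of_le hlam (hα n).1
  have htC : ∀ n, t n ∈ C := by
    intro n
    induction n with
    | zero => exact ht0
    | succ n ih =>
      rw [ht n]
      exact hTmaps (hCcv ih (hTmaps ih) (by linarith [(hα n).2]) (hαpos n).le (by ring))
  have key : ∀ n, ‖t (n + 1) - p‖ ≤ L * (1 - (1 - L) * lam) * ‖t n - p‖ := by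
    intro n
    set y := (1 - α n) • t n + α n • T (t n) with hy
    have hyC : y ∈ C := hCcv (htC n) (hTmaps (htC n)) (by linarith [(hα n).2]) (hαpos n).le (by ring)
    have h1 : ‖t (n + 1) - p‖ ≤ L * ‖y - p‖ := by
      rw [ht n]
      calc ‖T y - p‖ = ‖T y - T p‖ := by rw [hp]
        _ ≤ L * ‖y - p‖ := hT y hyC p hpC
    have h2 : ‖y - p‖ ≤ (1 - (1 - L) * α n) * ‖t n - p‖ := by
      have : y - p = (1 - α n) • (t n - p) + α n • (T (t n) - p) := by
        simp [hy, smul_sub, sub_smul]; abel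
      rw [this]
      have hTt : ‖T (t n) - p‖ ≤ L * ‖t n - p‖ := by
        calc ‖T (t n) - p‖ = ‖T (t n) - T p‖ := by rw [hp]
          _ ≤ L * ‖t n - p‖ := hT _ (htC n) p hpC
      calc ‖(1 - α n) • (t n - p) + α n • (T (t n) - p)‖
          ≤ ‖(1 - α n) • (t n - p)‖ + ‖α n • (T (t n) - p)‖ := norm_add_le _ _
        _ = (1 - α n) * ‖t n - p‖ + α n * ‖T (t n) - p‖ := by
            rw [norm_smul, norm_smul, Real.norm_eq_abs, Real.norm_eq_abs,
              abs_of_nonneg (by linarith [(hα n).2]), abs_of_nonneg (hαpos n).le]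
        _ ≤ (1 - α n) * ‖t n - p‖ + α n * (L * ‖t n - p‖) := by
            have := (hαpos n).le
            gcongr
        _ = (1 - (1 - L) * α n) * ‖t n - p‖ := by ring
    have h3 : (1 - (1 - L) * α n) ≤ (1 - (1 - L) * lam) := by
      have := (hα n).1; nlinarith
    calc ‖t (n + 1) - p‖ ≤ L * ‖y - p‖ := h1
      _ ≤ L * ((1 - (1 - L) * α n) * ‖t n - p‖) := by gcongr
      _ ≤ L * ((1 - (1 - L) * lam) * ‖t n - p‖) := by
          exact mul_le_mul_of_nonneg_left
            (mul_le_mul_of_nonneg_right h3 (norm_nonneg _)) hL0.le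
      _ = L * (1 - (1 - L) * lam) * ‖t n - p‖ := by ring
  refine ⟨key, fun n => ?_⟩
  induction n with
  | zero => simp
  | succ n ih =>
    have hlam1 : lam < 1 := lt_of_le_of_lt (hα 0).1 (hα 0).2
    have h4 : (1 - L) * lam < 1 - L := by nlinarith
    have hc : 0 ≤ L * (1 - (1 - L) * lam) := by nlinarith
    calc ‖t (n + 1) - p‖ ≤ L * (1 - (1 - L) * lam) * ‖t n - p‖ := key n
      _ ≤ L * (1 - (1 - L) * lam) * ((L * (1 - (1 - L) * lam)) ^ n * ‖t 0 - p‖) := by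
          exact mul_le_mul_of_nonneg_left ih hc
      _ = (L * (1 - (1 - L) * lam)) ^ (n + 1) * ‖t 0 - p‖ := by ring
end

section
/- For a contraction T with constant L ∈ (0,1) and the three-step iteration x_{n+1} = T y_n, y_n = (1-α_n) z_n + α_n T z_n, z_n = (1-β_n) x_n + β_n T x_n with α_n, β_n ≥ λ > 0, one has ‖x_{n+1} - p‖ ≤ L(1 - (1-L)λ)² ‖x_n - p‖ for each fixed point p, and hence ‖x_n - p‖ ≤ [L(1 - (1-L)λ)²]^{n-1} ‖x_1 - p‖. -/
open Filter

theorem three_step_iteration_contraction_rate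
    {E : Type*} [NormedAddCommGroup E] [NormedSpace ℝ E]
    (C : Set E) (hCne : C.Nonempty) (hCcl : IsClosed C) (hCcv : Convex ℝ C)
    (T : E → E) (hTmaps : Set.MapsTo T C C)
    (L : ℝ) (hL0 : 0 < L) (hL1 : L < 1)
    (hT : ∀ x ∈ C, ∀ y ∈ C, ‖T x - T y‖ ≤ L * ‖x - y‖)
    (p : E) (hpC : p ∈ C) (hp : T p = p)
    (lam : ℝ) (hlam : 0 < lam)
    (α β : ℕ → ℝ)
    (hα : ∀ n, lam ≤ α n ∧ α n < 1) (hβ : ∀ n, lam ≤ β n ∧ β n < 1)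
    (x y z : ℕ → E) (hx0 : x 0 ∈ C)
    (hz : ∀ n, z n = (1 - β n) • x n + β n • T (x n))
    (hy : ∀ n, y n = (1 - α n) • z n + α n • T (z n))
    (hx : ∀ n, x (n + 1) = T (y n)) :
    (∀ n, ‖x (n + 1) - p‖ ≤ L * (1 - (1 - L) * lam) ^ 2 * ‖x n - p‖) ∧
    (∀ n, ‖x n - p‖ ≤ (L * (1 - (1 - L) * lam) ^ 2) ^ n * ‖x 0 - p‖) := by
  have hlam1 : lam < 1 := lt_of_le_of_lt (hα 0).1 (hα 0).2
  have hq0 : 0 < 1 - (1 - L) * lam := by nlinarith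
  set q : ℝ := 1 - (1 - L) * lam with hqdef
  -- membership in C for the convex combinations
  have hcomb : ∀ u ∈ C, ∀ t : ℝ, lam ≤ t → t < 1 → (1 - t) • u + t • T u ∈ C := by
    intro u hu t ht1 ht2
    exact hCcv hu (hTmaps hu) (by linarith) (by linarith) (by ring)
  -- contraction estimate for one averaging step
  have key : ∀ u ∈ C, ∀ t : ℝ, lam ≤ t → t < 1 →
      ‖(1 - t) • u + t • T u - p‖ ≤ q * ‖u - p‖ := by
    intro u hu t ht1 ht2
    have ht0 : (0:ℝ) ≤ t := le_trans hlam.le ht1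
    have h1 : (1 - t) • u + t • T u - p = (1 - t) • (u - p) + t • (T u - p) := by
      module
    have hTu : ‖T u - p‖ ≤ L * ‖u - p‖ := by
      have := hT u hu p hpC
      rwa [hp] at this
    have hn0 : (0:ℝ) ≤ ‖u - p‖ := norm_nonneg _
    calc ‖(1 - t) • u + t • T u - p‖
        = ‖(1 - t) • (u - p) + t • (T u - p)‖ := by rw [h1]
      _ ≤ ‖(1 - t) • (u - p)‖ + ‖t • (T u - p)‖ := norm_add_le _ _
      _ = (1 - t) * ‖u - p‖ + t * ‖T u - p‖ := by
          rw [norm_smul, norm_smul, Real.norm_eq_abs, Real.norm_eq_abs,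
            abs_of_nonneg (by linarith), abs_of_nonneg ht0]
      _ ≤ (1 - t) * ‖u - p‖ + t * (L * ‖u - p‖) := by
          have := mul_le_mul_of_nonneg_left hTu ht0
          linarith
      _ = (1 - (1 - L) * t) * ‖u - p‖ := by ring
      _ ≤ q * ‖u - p‖ := by
          apply mul_le_mul_of_nonneg_right _ hn0
          nlinarith
  have hxC : ∀ n, x n ∈ C := by
    intro n
    induction n with
    | zero => exact hx0
    | succ n ih =>
      rw [hx n]
      apply hTmaps
      rw [hy n]
      apply hcomb _ _ _ (hα n).1 (hα n).2
      rw [hz n]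
      exact hcomb _ ih _ (hβ n).1 (hβ n).2
  have hzC : ∀ n, z n ∈ C := fun n => by
    rw [hz n]; exact hcomb _ (hxC n) _ (hβ n).1 (hβ n).2
  have main : ∀ n, ‖x (n + 1) - p‖ ≤ L * q ^ 2 * ‖x n - p‖ := by
    intro n
    have h1 : ‖x (n + 1) - p‖ ≤ L * ‖y n - p‖ := by
      rw [hx n]
      have := hT (y n) (by rw [hy n]; exact hcomb _ (hzC n) _ (hα n).1 (hα n).2) p hpC
      rwa [hp] at this
    have h2 : ‖y n - p‖ ≤ q * ‖z n - p‖ := by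
      rw [hy n]; exact key _ (hzC n) _ (hα n).1 (hα n).2
    have h3 : ‖z n - p‖ ≤ q * ‖x n - p‖ := by
      rw [hz n]; exact key _ (hxC n) _ (hβ n).1 (hβ n).2
    calc ‖x (n + 1) - p‖ ≤ L * ‖y n - p‖ := h1
      _ ≤ L * (q * ‖z n - p‖) := mul_le_mul_of_nonneg_left h2 hL0.le
      _ ≤ L * (q * (q * ‖x n - p‖)) := mul_le_mul_of_nonneg_left (mul_le_mul_of_nonneg_left h3 hq0.le) hL0.le
      _ = L * q ^ 2 * ‖x n - p‖ := by ring
  refine ⟨main, ?_⟩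
  intro n
  induction n with
  | zero => simp
  | succ n ih =>
    calc ‖x (n + 1) - p‖ ≤ L * q ^ 2 * ‖x n - p‖ := main n
      _ ≤ L * q ^ 2 * ((L * q ^ 2) ^ n * ‖x 0 - p‖) := by
          apply mul_le_mul_of_nonneg_left ih (by positivity)
      _ = (L * q ^ 2) ^ (n + 1) * ‖x 0 - p‖ := by ring
end

section
/- Let 0 < L < 1 and 0 < λ < 1. Then the ratio [(1 - (1-L)λ)²/(1 - (1-L)λ²)]^n tends to 0 as n → ∞; consequently the sequence m_n = [L(1-(1-L)λ)²]^n c₁ converges to 0 faster (in the sense of Berinde, i.e., m_n/k_n → 0) than k_n = [L(1-(1-L)λ²)]^n c₂, for any constants c₁, c₂ > 0. -/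
open Filter

theorem faster_than_s_iteration
    (L lam : ℝ) (hL0 : 0 < L) (hL1 : L < 1) (hlam0 : 0 < lam) (hlam1 : lam < 1) :
    Tendsto (fun n : ℕ => ((1 - (1 - L) * lam) ^ 2 / (1 - (1 - L) * lam ^ 2)) ^ n)
      atTop (nhds 0) ∧
    ∀ c₁ c₂ : ℝ, 0 < c₁ → 0 < c₂ →
      Tendsto (fun n : ℕ =>
        ((L * (1 - (1 - L) * lam) ^ 2) ^ n * c₁) / ((L * (1 - (1 - L) * lam ^ 2)) ^ n * c₂))
        atTop (nhds 0) := by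
  have hd : 0 < 1 - (1 - L) * lam ^ 2 := by nlinarith
  have hnum : 0 ≤ (1 - (1 - L) * lam) ^ 2 := sq_nonneg _
  have hlt : (1 - (1 - L) * lam) ^ 2 < 1 - (1 - L) * lam ^ 2 := by
    nlinarith [mul_pos (mul_pos (sub_pos.mpr hL1) hlam0) (show (0:ℝ) < 2 - lam - (1 - L) * lam by nlinarith)]
  have hr0 : 0 ≤ (1 - (1 - L) * lam) ^ 2 / (1 - (1 - L) * lam ^ 2) :=
    div_nonneg hnum hd.le
  have hr1 : (1 - (1 - L) * lam) ^ 2 / (1 - (1 - L) * lam ^ 2) < 1 :=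
    (div_lt_one hd).mpr hlt
  have habs : |(1 - (1 - L) * lam) ^ 2 / (1 - (1 - L) * lam ^ 2)| < 1 := by
    rw [abs_of_nonneg hr0]; exact hr1
  have h1 := tendsto_pow_atTop_nhds_zero_of_abs_lt_one habs
  refine ⟨h1, fun c₁ c₂ hc₁ hc₂ => ?_⟩
  have key : ∀ n : ℕ,
      ((L * (1 - (1 - L) * lam) ^ 2) ^ n * c₁) / ((L * (1 - (1 - L) * lam ^ 2)) ^ n * c₂)
        = ((1 - (1 - L) * lam) ^ 2 / (1 - (1 - L) * lam ^ 2)) ^ n * (c₁ / c₂) := by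
    intro n
    rw [div_pow, mul_pow, mul_pow]
    field_simp
  have := h1.mul_const (c₁ / c₂)
  rw [zero_mul] at this
  simp only [key]
  exact this
end

section
/- Let E be a uniformly convex Banach space, C ⊆ E nonempty closed convex, T : C → C nonexpansive with a fixed point p, and let x_n be defined by x_{n+1} = T y_n, y_n = (1-α_n) z_n + α_n T z_n, z_n = (1-β_n) x_n + β_n T x_n, where α_n, β_n are bounded away from 0 and 1. Then lim_{n→∞} ‖x_n - T x_n‖ = 0. -/
open Filter

set_option maxHeartbeats 1000000

theorem iteration_asymptotic_regularity
    {E : Type*} [NormedAddCommGroup E] [NormedSpace ℝ E]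
    [UniformConvexSpace E] [CompleteSpace E]
    (C : Set E) (hCne : C.Nonempty) (hCcl : IsClosed C) (hCcv : Convex ℝ C)
    (T : E → E) (hTmaps : Set.MapsTo T C C)
    (hT : ∀ x ∈ C, ∀ y ∈ C, ‖T x - T y‖ ≤ ‖x - y‖)
    (p : E) (hpC : p ∈ C) (hp : T p = p)
    (a b : ℝ) (ha : 0 < a) (hb : b < 1)
    (α β : ℕ → ℝ)
    (hα : ∀ n, a ≤ α n ∧ α n ≤ b) (hβ : ∀ n, a ≤ β n ∧ β n ≤ b)
    (x y z : ℕ → E) (hx0 : x 0 ∈ C)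
    (hz : ∀ n, z n = (1 - β n) • x n + β n • T (x n))
    (hy : ∀ n, y n = (1 - α n) • z n + α n • T (z n))
    (hx : ∀ n, x (n + 1) = T (y n)) :
    Tendsto (fun n => ‖x n - T (x n)‖) atTop (nhds 0) := by
  have hab : a ≤ b := le_trans (hα 0).1 (hα 0).2
  have ha1 : a < 1 := lt_of_le_of_lt hab hb
  -- memberships
  have hzC : ∀ n, x n ∈ C → z n ∈ C := by
    intro n h
    rw [hz]
    exact hCcv h (hTmaps h) (by linarith [(hβ n).2]) (by linarith [(hβ n).1]) (by ring)
  have hyC : ∀ n, z n ∈ C → y n ∈ C := by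
    intro n h
    rw [hy]
    exact hCcv h (hTmaps h) (by linarith [(hα n).2]) (by linarith [(hα n).1]) (by ring)
  have hxC : ∀ n, x n ∈ C := by
    intro n
    induction n with
    | zero => exact hx0
    | succ k ih =>
      rw [hx]
      exact hTmaps (hyC k (hzC k ih))
  -- nonexpansive toward p
  have hTnorm : ∀ w ∈ C, ‖T w - p‖ ≤ ‖w - p‖ := by
    intro w hw
    have := hT w hw p hpC
    rwa [hp] at this
  set r : ℕ → ℝ := fun n => ‖x n - p‖ with hr_def
  -- generic convex combination inequality
  have hcomb : ∀ (t : ℝ) (u v : E), 0 ≤ t → t ≤ 1 →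
      ‖(1 - t) • u + t • v - p‖ ≤ (1 - t) * ‖u - p‖ + t * ‖v - p‖ := by
    intro t u v h0 h1
    have heq : (1 - t) • u + t • v - p = (1 - t) • (u - p) + t • (v - p) := by
      module
    rw [heq]
    calc ‖(1 - t) • (u - p) + t • (v - p)‖
        ≤ ‖(1 - t) • (u - p)‖ + ‖t • (v - p)‖ := norm_add_le _ _
      _ = (1 - t) * ‖u - p‖ + t * ‖v - p‖ := by
          rw [norm_smul, norm_smul, Real.norm_of_nonneg (by linarith),
            Real.norm_of_nonneg h0]
  have hzr : ∀ n, ‖z n - p‖ ≤ r n := by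
    intro n
    rw [hz]
    have h1 := hcomb (β n) (x n) (T (x n)) (le_trans ha.le (hβ n).1)
      (le_trans (hβ n).2 hb.le)
    have h2 := hTnorm (x n) (hxC n)
    have hβn : 0 ≤ β n := le_trans ha.le (hβ n).1
    nlinarith [norm_nonneg (x n - p)]
  have hyz : ∀ n, ‖y n - p‖ ≤ ‖z n - p‖ := by
    intro n
    rw [hy]
    have h1 := hcomb (α n) (z n) (T (z n)) (le_trans ha.le (hα n).1)
      (le_trans (hα n).2 hb.le)
    have h2 := hTnorm (z n) (hzC n (hxC n))
    have hαn : 0 ≤ α n := le_trans ha.le (hα n).1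
    nlinarith [norm_nonneg (z n - p)]
  have hr_succ : ∀ n, r (n + 1) ≤ ‖y n - p‖ := by
    intro n
    show ‖x (n + 1) - p‖ ≤ _
    rw [hx]
    exact hTnorm (y n) (hyC n (hzC n (hxC n)))
  have hr_anti : Antitone r :=
    antitone_nat_of_succ_le fun n => (hr_succ n).trans ((hyz n).trans (hzr n))
  have hr0 : ∀ n, 0 ≤ r n := fun n => norm_nonneg _
  have hbdd : BddBelow (Set.range r) := ⟨0, by rintro _ ⟨n, rfl⟩; exact hr0 n⟩
  set d := ⨅ n, r n with hd_def
  have hrd : Tendsto r atTop (nhds d) := tendsto_atTop_ciInf hr_anti hbdd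
  have hd_le : ∀ n, d ≤ r n := fun n => ciInf_le hbdd n
  have hd0 : 0 ≤ d := le_ciInf hr0
  have hdz : ∀ n, d ≤ ‖z n - p‖ :=
    fun n => (hd_le (n + 1)).trans ((hr_succ n).trans (hyz n))
  have hR : ∀ n, r n ≤ r 0 := fun n => hr_anti (Nat.zero_le n)
  rw [Metric.tendsto_atTop]
  intro ε hε
  set R := r 0 + 1 with hR_def
  have hRpos : 0 < R := by have := hr0 0; positivity
  obtain ⟨δ₀, hδ₀pos, hδ₀⟩ :=
    exists_forall_closed_ball_dist_add_le_two_sub E (div_pos hε hRpos)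
  set δ := min δ₀ 1 with hδ_def
  have hδpos : 0 < δ := lt_min hδ₀pos one_pos
  have hδ1 : δ ≤ 1 := min_le_right _ _
  set c := min a (1 - b) with hc_def
  have hcpos : 0 < c := lt_min ha (by linarith)
  have hc1 : c < 1 := lt_of_le_of_lt (min_le_left _ _) ha1
  have hcδ : c * δ < 1 := by nlinarith
  -- key estimate
  have key : ∀ n, ε ≤ ‖x n - T (x n)‖ → ‖z n - p‖ ≤ r n * (1 - c * δ) := by
    intro n hn
    set u := x n - p with hu_def
    set v := T (x n) - p with hv_def
    have hu : ‖u‖ = r n := rfl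
    have hv : ‖v‖ ≤ r n := hTnorm _ (hxC n)
    have huv : ε ≤ ‖u - v‖ := by
      have : u - v = x n - T (x n) := by rw [hu_def, hv_def]; abel
      rw [this]; exact hn
    have hrpos : 0 < r n := by
      have := norm_sub_le u v
      nlinarith [norm_nonneg u, norm_nonneg v]
    have hu' : ‖(r n)⁻¹ • u‖ ≤ 1 := by
      rw [norm_smul, Real.norm_of_nonneg (by positivity), hu]
      rw [inv_mul_cancel₀ hrpos.ne']
    have hv' : ‖(r n)⁻¹ • v‖ ≤ 1 := by
      rw [norm_smul, Real.norm_of_nonneg (by positivity)]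
      rw [inv_mul_le_one₀ hrpos]; simpa using hv
    have huv' : ε / R ≤ ‖(r n)⁻¹ • u - (r n)⁻¹ • v‖ := by
      rw [← smul_sub, norm_smul, Real.norm_of_nonneg (by positivity)]
      have h1 : ε / R ≤ ε / r n := by
        apply div_le_div_of_nonneg_left hε.le hrpos
        have := hR n; linarith
      have h2 : ε / r n ≤ (r n)⁻¹ * ‖u - v‖ := by
        rw [div_eq_inv_mul]
        exact mul_le_mul_of_nonneg_left huv (by positivity)
      linarith
    have hsum' : ‖(r n)⁻¹ • u + (r n)⁻¹ • v‖ ≤ 2 - δ₀ := hδ₀ hu' hv' huv'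
    have hsum : ‖u + v‖ ≤ r n * (2 - δ) := by
      have : ‖u + v‖ = r n * ‖(r n)⁻¹ • u + (r n)⁻¹ • v‖ := by
        rw [← smul_add, norm_smul, Real.norm_of_nonneg (by positivity)]
        rw [← mul_assoc, mul_inv_cancel₀ hrpos.ne', one_mul]
      rw [this]
      have hδle : δ ≤ δ₀ := min_le_left _ _
      nlinarith
    have hznp : z n - p = (1 - β n) • u + β n • v := by
      rw [hz, hu_def, hv_def]; module
    have hβa : a ≤ β n := (hβ n).1
    have hβb : β n ≤ b := (hβ n).2
    rcases le_total (β n) (1 / 2) with hhalf | hhalf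
    · have heq : (1 - β n) • u + β n • v = (1 - 2 * β n) • u + β n • (u + v) := by
        module
      rw [hznp, heq]
      calc ‖(1 - 2 * β n) • u + β n • (u + v)‖
          ≤ ‖(1 - 2 * β n) • u‖ + ‖β n • (u + v)‖ := norm_add_le _ _
        _ = (1 - 2 * β n) * ‖u‖ + β n * ‖u + v‖ := by
            rw [norm_smul, norm_smul, Real.norm_of_nonneg (by linarith),
              Real.norm_of_nonneg (by linarith)]
        _ ≤ r n * (1 - c * δ) := by
            have hca : c ≤ a := min_le_left _ _
            rw [hu]
            have h4 : β n * ‖u + v‖ ≤ β n * (r n * (2 - δ)) :=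
              mul_le_mul_of_nonneg_left hsum (by linarith)
            nlinarith [mul_nonneg (mul_nonneg hrpos.le hδpos.le)
              (show (0:ℝ) ≤ β n - c by linarith)]
    · have heq : (1 - β n) • u + β n • v = (2 * β n - 1) • v + (1 - β n) • (u + v) := by
        module
      rw [hznp, heq]
      calc ‖(2 * β n - 1) • v + (1 - β n) • (u + v)‖
          ≤ ‖(2 * β n - 1) • v‖ + ‖(1 - β n) • (u + v)‖ := norm_add_le _ _
        _ = (2 * β n - 1) * ‖v‖ + (1 - β n) * ‖u + v‖ := by
            rw [norm_smul, norm_smul, Real.norm_of_nonneg (by linarith),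
              Real.norm_of_nonneg (by linarith)]
        _ ≤ r n * (1 - c * δ) := by
            have hcb : c ≤ 1 - b := min_le_right _ _
            have h4 : (1 - β n) * ‖u + v‖ ≤ (1 - β n) * (r n * (2 - δ)) :=
              mul_le_mul_of_nonneg_left hsum (by linarith)
            have h5 : (2 * β n - 1) * ‖v‖ ≤ (2 * β n - 1) * r n :=
              mul_le_mul_of_nonneg_left hv (by linarith)
            nlinarith [mul_nonneg (mul_nonneg hrpos.le hδpos.le)
              (show (0:ℝ) ≤ (1 - β n) - c by linarith)]
  -- assemble
  rcases eq_or_lt_of_le hd0 with hdeq | hdpos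
  · -- d = 0 : r n → 0
    have : ∀ᶠ n in atTop, r n < ε / 2 := by
      have := hrd.eventually (gt_mem_nhds (show d < ε / 2 by rw [← hdeq]; positivity))
      exact this
    obtain ⟨N, hN⟩ := eventually_atTop.1 this
    refine ⟨N, fun n hn => ?_⟩
    have h1 : ‖x n - T (x n)‖ ≤ 2 * r n := by
      have h2 := hTnorm (x n) (hxC n)
      calc ‖x n - T (x n)‖ = ‖(x n - p) - (T (x n) - p)‖ := by abel_nf
        _ ≤ ‖x n - p‖ + ‖T (x n) - p‖ := norm_sub_le _ _
        _ ≤ 2 * r n := by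
            show ‖x n - p‖ + ‖T (x n) - p‖ ≤ 2 * ‖x n - p‖
            linarith
    rw [Real.dist_eq, sub_zero, abs_of_nonneg (norm_nonneg _)]
    have := hN n hn
    linarith
  · -- d > 0
    have hlim : Tendsto (fun n => r n * (1 - c * δ)) atTop (nhds (d * (1 - c * δ))) :=
      hrd.mul_const _
    have hlt : d * (1 - c * δ) < d := by
      have h6 : 0 < d * (c * δ) := mul_pos hdpos (mul_pos hcpos hδpos)
      nlinarith
    have : ∀ᶠ n in atTop, r n * (1 - c * δ) < d :=
      hlim.eventually (gt_mem_nhds hlt)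
    obtain ⟨N, hN⟩ := eventually_atTop.1 this
    refine ⟨N, fun n hn => ?_⟩
    rw [Real.dist_eq, sub_zero, abs_of_nonneg (norm_nonneg _)]
    by_contra hcon
    push_neg at hcon
    have h1 := key n hcon
    have h2 := hdz n
    have h3 := hN n hn
    linarith
end

section
/- Let E be a uniformly convex Banach space and C a nonempty closed convex subset, T : C → C nonexpansive. Then I - T is demiclosed at zero: if x_n ∈ C converges weakly to x and x_n - T x_n converges strongly to 0, then x ∈ C and T x = x. -/
open Filter

section DemiclosedAux

variable {E : Type*} [NormedAddCommGroup E] [NormedSpace ℝ E]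

/-- Dyadic mean trees built from tails of the sequence `x`: `dTree x k N m` means `m` is a
balanced dyadic midpoint combination of depth `k` of terms `x i` with `i ≥ N`
(repetitions allowed). -/
def dTree (x : ℕ → E) : ℕ → ℕ → E → Prop
  | 0, N, m => ∃ i, N ≤ i ∧ m = x i
  | (k+1), N, m => ∃ a b, dTree x k N a ∧ dTree x k N b ∧
      m = (2⁻¹ : ℝ) • a + (2⁻¹ : ℝ) • b

lemma dTree_mono (x : ℕ → E) : ∀ (k) {N N' : ℕ} {m : E}, N ≤ N' → dTree x k N' m →
    dTree x k N m := by
  intro k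
  induction k with
  | zero => rintro N N' m hNN ⟨i, hi, rfl⟩; exact ⟨i, hNN.trans hi, rfl⟩
  | succ k ih =>
      rintro N N' m hNN ⟨a, b, ha, hb, rfl⟩
      exact ⟨a, b, ih hNN ha, ih hNN hb, rfl⟩

lemma dTree_exists (x : ℕ → E) : ∀ k N, ∃ m, dTree x k N m := by
  intro k
  induction k with
  | zero => intro N; exact ⟨x N, N, le_rfl, rfl⟩
  | succ k ih =>
      intro N
      obtain ⟨m, hm⟩ := ih N
      exact ⟨(2⁻¹ : ℝ) • m + (2⁻¹ : ℝ) • m, m, m, hm, hm, rfl⟩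

lemma dTree_mem {x : ℕ → E} {C : Set E} (hCcv : Convex ℝ C) (hxC : ∀ n, x n ∈ C) :
    ∀ (k) {N m}, dTree x k N m → m ∈ C := by
  intro k
  induction k with
  | zero => rintro N m ⟨i, hi, rfl⟩; exact hxC i
  | succ k ih =>
      rintro N m ⟨a, b, ha, hb, rfl⟩
      exact hCcv (ih ha) (ih hb) (by norm_num) (by norm_num) (by norm_num)

lemma dTree_ball {x : ℕ → E} {l : E} {d : ℝ} (hd : ∀ n, ‖x n - l‖ ≤ d) :
    ∀ (k) {N m}, dTree x k N m → ‖m - l‖ ≤ d := by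
  intro k
  induction k with
  | zero => rintro N m ⟨i, hi, rfl⟩; exact hd i
  | succ k ih =>
      rintro N m ⟨a, b, ha, hb, rfl⟩
      have h : (2⁻¹ : ℝ) • a + (2⁻¹ : ℝ) • b - l
          = (2⁻¹ : ℝ) • (a - l) + (2⁻¹ : ℝ) • (b - l) := by module
      rw [h]
      calc ‖(2⁻¹ : ℝ) • (a - l) + (2⁻¹ : ℝ) • (b - l)‖
          ≤ ‖(2⁻¹ : ℝ) • (a - l)‖ + ‖(2⁻¹ : ℝ) • (b - l)‖ := norm_add_le _ _
        _ = 2⁻¹ * ‖a - l‖ + 2⁻¹ * ‖b - l‖ := by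
            rw [norm_smul, norm_smul]; norm_num
        _ ≤ 2⁻¹ * d + 2⁻¹ * d := by
            have := ih ha; have := ih hb; gcongr
        _ = d := by ring

lemma dTree_dual {x : ℕ → E} (g : E →L[ℝ] ℝ) {c r : ℝ} :
    ∀ (k) {N m}, (∀ i, N ≤ i → |g (x i) - c| ≤ r) → dTree x k N m → |g m - c| ≤ r := by
  intro k
  induction k with
  | zero => rintro N m hg ⟨i, hi, rfl⟩; exact hg i hi
  | succ k ih =>
      rintro N m hg ⟨a, b, ha, hb, rfl⟩
      have h1 : |g a - c| ≤ r := ih hg ha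
      have h2 : |g b - c| ≤ r := ih hg hb
      have h : g ((2⁻¹ : ℝ) • a + (2⁻¹ : ℝ) • b) - c
          = 2⁻¹ * (g a - c) + 2⁻¹ * (g b - c) := by
        rw [map_add, map_smul, map_smul]; simp [smul_eq_mul]; ring
      rw [h]
      calc |2⁻¹ * (g a - c) + 2⁻¹ * (g b - c)|
          ≤ |2⁻¹ * (g a - c)| + |2⁻¹ * (g b - c)| := abs_add_le _ _
        _ = 2⁻¹ * |g a - c| + 2⁻¹ * |g b - c| := by
            rw [abs_mul, abs_mul, abs_of_nonneg (by norm_num : (0:ℝ) ≤ 2⁻¹)]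
        _ ≤ r := by nlinarith

end DemiclosedAux

section Kak

/-- The radius recursion in Kakutani's uniform Banach-Saks argument. -/
noncomputable def kakSeq (d θ δ₀ : ℝ) : ℕ → ℝ
  | 0 => d
  | (k+1) => max ((kakSeq d θ δ₀ k + θ) / 2) (kakSeq d θ δ₀ k * (1 - δ₀ / 2))

variable {d θ δ₀ : ℝ}

lemma kakSeq_ge (hθ : 0 < θ) (hθd : θ ≤ d) : ∀ k, θ ≤ kakSeq d θ δ₀ k := by
  intro k
  induction k with
  | zero => exact hθd
  | succ k ih =>
      refine le_max_of_le_left ?_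
      linarith

lemma kakSeq_le (hθ : 0 < θ) (hθd : θ ≤ d) (hδ : 0 ≤ δ₀) : ∀ k, kakSeq d θ δ₀ k ≤ d := by
  intro k
  induction k with
  | zero => exact le_rfl
  | succ k ih =>
      have h1 := kakSeq_ge (δ₀ := δ₀) hθ hθd k
      apply max_le
      · linarith
      · nlinarith

lemma kakSeq_small (hθ : 0 < θ) (hθd : θ ≤ d) (hδ : 0 < δ₀) :
    ∃ k, kakSeq d θ δ₀ k ≤ 2 * θ := by
  by_contra hcon
  push_neg at hcon
  set κ : ℝ := min (θ / 2) (θ * δ₀) with hκ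
  have hκpos : 0 < κ := by positivity
  have hstep : ∀ k, kakSeq d θ δ₀ (k+1) ≤ kakSeq d θ δ₀ k - κ := by
    intro k
    have hbig : 2 * θ < kakSeq d θ δ₀ k := hcon k
    apply max_le
    · have : κ ≤ θ / 2 := min_le_left _ _
      linarith
    · have h2 : κ ≤ θ * δ₀ := min_le_right _ _
      have heq : kakSeq d θ δ₀ k * (1 - δ₀ / 2)
          = kakSeq d θ δ₀ k - kakSeq d θ δ₀ k * (δ₀ / 2) := by ring
      rw [heq]
      have : θ * δ₀ ≤ kakSeq d θ δ₀ k * (δ₀ / 2) := by nlinarith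
      linarith
  have hlin : ∀ k, kakSeq d θ δ₀ k ≤ d - k * κ := by
    intro k
    induction k with
    | zero => simp [kakSeq]
    | succ k ih =>
        have := hstep k
        push_cast
        linarith
  obtain ⟨k, hk⟩ := exists_nat_gt ((d - θ) / κ)
  have h1 : θ ≤ kakSeq d θ δ₀ k := kakSeq_ge hθ hθd k
  have h2 : kakSeq d θ δ₀ k ≤ d - k * κ := hlin k
  have h4 : d - θ < k * κ := by
    rw [div_lt_iff₀ hκpos] at hk
    linarith
  linarith

end Kak

section MidLemma

variable {E : Type*} [NormedAddCommGroup E] [NormedSpace ℝ E]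

/-- Key uniform convexity estimate: the displacement of a nonexpansive map at the midpoint of
`a` and `b` is controlled by the displacements at `a` and `b`. -/
lemma mid_displacement {C : Set E} {T : E → E}
    (hT : ∀ x ∈ C, ∀ y ∈ C, ‖T x - T y‖ ≤ ‖x - y‖) (hCcv : Convex ℝ C)
    {a b : E} (ha : a ∈ C) (hb : b ∈ C) {R ε' δ' : ℝ}
    (hR : ‖a - b‖ ≤ R) (hε' : 0 < ε') (hδ' : 0 < δ')
    (hUC : ∀ ⦃u : E⦄, ‖u‖ ≤ 1 → ∀ ⦃v : E⦄, ‖v‖ ≤ 1 → ε' ≤ ‖u - v‖ → ‖u + v‖ ≤ 2 - δ') :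
    ‖((2⁻¹ : ℝ) • a + (2⁻¹ : ℝ) • b) - T ((2⁻¹ : ℝ) • a + (2⁻¹ : ℝ) • b)‖ ≤
      (‖a - T a‖ + ‖b - T b‖) / 2 + max ((‖a - T a‖ + ‖b - T b‖) / δ') (R * ε' / 4) := by
  set z : E := (2⁻¹ : ℝ) • a + (2⁻¹ : ℝ) • b with hz
  have hzC : z ∈ C := hCcv ha hb (by norm_num) (by norm_num) (by norm_num)
  set s : ℝ := ‖a - b‖ with hs
  set D : ℝ := ‖a - T a‖ + ‖b - T b‖ with hD
  have hDnn : 0 ≤ D := by positivity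
  rcases eq_or_lt_of_le (norm_nonneg (a - b)) with hs0 | hspos
  · -- degenerate case `a = b`
    have hab : a = b := by
      have : ‖a - b‖ = 0 := hs0.symm
      rwa [norm_sub_eq_zero_iff] at this
    subst hab
    have hza : z = a := by rw [hz]; module
    rw [hza]
    have : ‖a - T a‖ = D / 2 := by rw [hD]; ring
    rw [this]
    have : (0:ℝ) ≤ max (D / δ') (R * ε' / 4) :=
      le_max_of_le_left (by positivity)
    linarith
  · -- main case `s > 0`
    have hspos' : (0:ℝ) < s := hspos
    set u : E := T z - T a with hu
    set v : E := T z - T b with hv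
    have hun : ‖u‖ ≤ s / 2 := by
      have h1 : ‖T z - T a‖ ≤ ‖z - a‖ := hT z hzC a ha
      have h2 : z - a = (2⁻¹ : ℝ) • (b - a) := by rw [hz]; module
      have h3 : ‖z - a‖ = 2⁻¹ * ‖b - a‖ := by
        rw [h2, norm_smul]; norm_num
      rw [hu]
      rw [h3, norm_sub_rev b a] at h1
      linarith
    have hvn : ‖v‖ ≤ s / 2 := by
      have h1 : ‖T z - T b‖ ≤ ‖z - b‖ := hT z hzC b hb
      have h2 : z - b = (2⁻¹ : ℝ) • (a - b) := by rw [hz]; module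
      have h3 : ‖z - b‖ = 2⁻¹ * ‖a - b‖ := by
        rw [h2, norm_smul]; norm_num
      rw [hv]
      rw [h3] at h1
      linarith
    have huv : s - D ≤ ‖u - v‖ := by
      have h1 : u - v = T b - T a := by rw [hu, hv]; abel
      have h2 : a - b = ((a - T a) + (T a - T b)) + (T b - b) := by abel
      have h3 : ‖a - b‖ ≤ ‖a - T a‖ + ‖T a - T b‖ + ‖T b - b‖ := by
        rw [h2]
        exact le_trans (norm_add_le _ _) (by gcongr; exact norm_add_le _ _)
      rw [h1, norm_sub_rev]
      have h4 : ‖T b - b‖ = ‖b - T b‖ := norm_sub_rev _ _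
      rw [h4] at h3
      rw [hD]; linarith
    -- the deviation from the midpoint of the images
    set w : E := T z - ((2⁻¹ : ℝ) • T a + (2⁻¹ : ℝ) • T b) with hw
    have hwuv : w = (2⁻¹ : ℝ) • u + (2⁻¹ : ℝ) • v := by
      rw [hw, hu, hv]; module
    have hwbound : ‖w‖ ≤ max (D / δ') (R * ε' / 4) := by
      by_cases hpar : ε' ≤ ‖(2 / s) • u - (-((2 / s) • v))‖
      · -- uniformly convex case: `s` is small compared to `D`
        have h2s : (0:ℝ) < 2 / s := by positivity
        have hα : ‖(2 / s) • u‖ ≤ 1 := by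
          rw [norm_smul, Real.norm_of_nonneg h2s.le]
          rw [div_mul_eq_mul_div, div_le_one hspos']
          linarith
        have hβ : ‖-((2 / s) • v)‖ ≤ 1 := by
          rw [norm_neg, norm_smul, Real.norm_of_nonneg h2s.le]
          rw [div_mul_eq_mul_div, div_le_one hspos']
          linarith
        have hsum := hUC hα hβ hpar
        have hsum2 : (2 / s) • u + -((2 / s) • v) = (2 / s) • (u - v) := by module
        rw [hsum2, norm_smul, Real.norm_of_nonneg h2s.le] at hsum
        have h5 : (2 / s) * (s - D) ≤ (2 / s) * ‖u - v‖ := by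
          apply mul_le_mul_of_nonneg_left huv h2s.le
        have h6 : (2 / s) * (s - D) ≤ 2 - δ' := le_trans h5 hsum
        have h7 : 2 - 2 * D / s ≤ 2 - δ' := by
          have heq : (2 / s) * (s - D) = 2 - 2 * D / s := by field_simp
          linarith [heq ▸ h6]
        have h8 : δ' * s ≤ 2 * D := by
          have h9 : δ' ≤ 2 * D / s := by linarith
          calc δ' * s ≤ (2 * D / s) * s := by
                apply mul_le_mul_of_nonneg_right h9 hspos'.le
            _ = 2 * D := by field_simp
        have h10 : s / 2 ≤ D / δ' := by
          rw [div_le_div_iff₀ (by norm_num) hδ']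
          linarith
        have h11 : ‖w‖ ≤ s / 2 := by
          rw [hwuv]
          calc ‖(2⁻¹ : ℝ) • u + (2⁻¹ : ℝ) • v‖ ≤ ‖(2⁻¹ : ℝ) • u‖ + ‖(2⁻¹ : ℝ) • v‖ :=
                norm_add_le _ _
            _ = 2⁻¹ * ‖u‖ + 2⁻¹ * ‖v‖ := by rw [norm_smul, norm_smul]; norm_num
            _ ≤ s / 2 := by nlinarith
        exact le_max_of_le_left (h11.trans h10)
      · -- nearly antipodal case: `u` and `-v` nearly parallel
        push_neg at hpar
        have h1 : (2 / s) • u - (-((2 / s) • v)) = (4 / s) • w := by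
          rw [hwuv]; module
        rw [h1, norm_smul, Real.norm_of_nonneg (by positivity : (0:ℝ) ≤ 4 / s)] at hpar
        have h2 : ‖w‖ < s * ε' / 4 := by
          rw [div_mul_eq_mul_div, div_lt_iff₀ hspos'] at hpar
          linarith

        have h3 : s * ε' / 4 ≤ R * ε' / 4 := by nlinarith
        exact le_max_of_le_right (by linarith)
    -- put everything together
    have hdecomp : z - T z = ((2⁻¹ : ℝ) • (a - T a) + (2⁻¹ : ℝ) • (b - T b)) - w := by
      rw [hw]; module
    calc ‖z - T z‖ = ‖((2⁻¹ : ℝ) • (a - T a) + (2⁻¹ : ℝ) • (b - T b)) - w‖ := by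
          rw [hdecomp]
      _ ≤ ‖(2⁻¹ : ℝ) • (a - T a) + (2⁻¹ : ℝ) • (b - T b)‖ + ‖w‖ := norm_sub_le _ _
      _ ≤ (‖(2⁻¹ : ℝ) • (a - T a)‖ + ‖(2⁻¹ : ℝ) • (b - T b)‖) + ‖w‖ := by
          gcongr; exact norm_add_le _ _
      _ = (‖a - T a‖ + ‖b - T b‖) / 2 + ‖w‖ := by
          rw [norm_smul, norm_smul]; norm_num; ring
      _ ≤ (‖a - T a‖ + ‖b - T b‖) / 2 + max (D / δ') (R * ε' / 4) := by
          gcongr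
      _ = (‖a - T a‖ + ‖b - T b‖) / 2 + max ((‖a - T a‖ + ‖b - T b‖) / δ') (R * ε' / 4) := by
          rw [hD]

end MidLemma

section Main

variable {E : Type*} [NormedAddCommGroup E] [NormedSpace ℝ E] [UniformConvexSpace E]

/-- Displacement bound for dyadic mean trees: given a depth `k` and a target `ε`, if all the
leaves have small enough displacement, then every tree value of depth `k` has displacement
at most `ε`. -/
lemma dTree_displacement {C : Set E} {T : E → E}
    (hT : ∀ x ∈ C, ∀ y ∈ C, ‖T x - T y‖ ≤ ‖x - y‖) (hCcv : Convex ℝ C)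
    {x : ℕ → E} (hxC : ∀ n, x n ∈ C) {l : E} {d : ℝ}
    (hd : ∀ n, ‖x n - l‖ ≤ d) (hdpos : 0 < d) :
    ∀ k, ∀ ε : ℝ, 0 < ε → ∃ β : ℝ, 0 < β ∧ ∀ N m,
      (∀ i, N ≤ i → ‖x i - T (x i)‖ ≤ β) → dTree x k N m → ‖m - T m‖ ≤ ε := by
  intro k
  induction k with
  | zero =>
      intro ε hε
      refine ⟨ε, hε, ?_⟩
      rintro N m htail ⟨i, hi, rfl⟩
      exact htail i hi
  | succ k ih =>
      intro ε hε
      set R : ℝ := 2 * d with hR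
      have hRpos : 0 < R := by positivity
      set ε' : ℝ := ε / R with hε'def
      have hε'pos : 0 < ε' := by positivity
      obtain ⟨δ', hδ', hUC⟩ := exists_forall_closed_ball_dist_add_le_two_sub E hε'pos
      set ε₁ : ℝ := min (ε / 4) (ε * δ' / 8) with hε₁def
      have hε₁pos : 0 < ε₁ := by positivity
      obtain ⟨β, hβpos, hind⟩ := ih ε₁ hε₁pos
      refine ⟨β, hβpos, ?_⟩
      rintro N m htail ⟨a, b, ha, hb, rfl⟩
      have haC : a ∈ C := dTree_mem hCcv hxC k ha
      have hbC : b ∈ C := dTree_mem hCcv hxC k hb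
      have hfa : ‖a - T a‖ ≤ ε₁ := hind N a htail ha
      have hfb : ‖b - T b‖ ≤ ε₁ := hind N b htail hb
      have hab : ‖a - b‖ ≤ R := by
        have h1 : ‖a - l‖ ≤ d := dTree_ball hd k ha
        have h2 : ‖b - l‖ ≤ d := dTree_ball hd k hb
        calc ‖a - b‖ = ‖(a - l) - (b - l)‖ := by abel_nf
          _ ≤ ‖a - l‖ + ‖b - l‖ := norm_sub_le _ _
          _ ≤ R := by rw [hR]; linarith
      have key := mid_displacement hT hCcv haC hbC hab hε'pos hδ' hUC
      have hmax : max ((‖a - T a‖ + ‖b - T b‖) / δ') (R * ε' / 4) ≤ ε / 4 := by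
        apply max_le
        · have h1 : ‖a - T a‖ + ‖b - T b‖ ≤ 2 * ε₁ := by linarith
          have h2 : ε₁ ≤ ε * δ' / 8 := min_le_right _ _
          rw [div_le_iff₀ hδ']
          nlinarith
        · have : R * ε' = ε := by
            rw [hε'def]; field_simp
          rw [this]
      have hhalf : (‖a - T a‖ + ‖b - T b‖) / 2 ≤ ε₁ := by linarith
      have h3 : ε₁ ≤ ε / 4 := min_le_left _ _
      calc ‖((2⁻¹ : ℝ) • a + (2⁻¹ : ℝ) • b) - T ((2⁻¹ : ℝ) • a + (2⁻¹ : ℝ) • b)‖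
          ≤ (‖a - T a‖ + ‖b - T b‖) / 2
              + max ((‖a - T a‖ + ‖b - T b‖) / δ') (R * ε' / 4) := key
        _ ≤ ε / 4 + ε / 4 := by linarith
        _ ≤ ε := by linarith

/-- Kakutani's uniform Banach-Saks construction: from every tail of the weakly convergent
sequence one can build a dyadic mean of uniformly bounded depth that is close to the weak
limit `l`. -/
lemma kak_main {x : ℕ → E} {l : E}
    (hweak : ∀ f : E →L[ℝ] ℝ, Tendsto (fun n => f (x n)) atTop (nhds (f l)))
    {d θ : ℝ} (hd : ∀ n, ‖x n - l‖ ≤ d) (hdpos : 0 < d) (hθ : 0 < θ) (hθd : 2 * θ < d) :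
    ∃ k, ∀ N, ∃ m, dTree x k N m ∧ ‖m - l‖ ≤ 2 * θ := by
  have hθd' : θ ≤ d := by linarith
  have hε₀pos : 0 < θ / (2 * d) := by positivity
  obtain ⟨δ₀, hδ₀, hUC⟩ := exists_forall_closed_ball_dist_add_le_two_sub E hε₀pos
  obtain ⟨k₀, hk₀⟩ := kakSeq_small (δ₀ := δ₀) hθ hθd' hδ₀
  have main : ∀ k N, ∃ m, dTree x k N m ∧ ‖m - l‖ ≤ kakSeq d θ δ₀ k := by
    intro k
    induction k with
    | zero =>
        intro N
        exact ⟨x N, ⟨N, le_rfl, rfl⟩, hd N⟩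
    | succ k ih =>
        intro N
        obtain ⟨m₁, hm₁tree, hm₁⟩ := ih N
        have hck_ge : θ ≤ kakSeq d θ δ₀ k := kakSeq_ge hθ hθd' k
        have hck_le : kakSeq d θ δ₀ k ≤ d := kakSeq_le hθ hθd' hδ₀.le k
        by_cases h1 : ‖m₁ - l‖ ≤ θ
        · refine ⟨(2⁻¹ : ℝ) • m₁ + (2⁻¹ : ℝ) • m₁, ⟨m₁, m₁, hm₁tree, hm₁tree, rfl⟩, ?_⟩
          have heq : (2⁻¹ : ℝ) • m₁ + (2⁻¹ : ℝ) • m₁ = m₁ := by module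
          rw [heq]
          refine h1.trans (le_trans ?_ (le_max_left _ _))
          linarith
        · push_neg at h1
          have hne : m₁ - l ≠ 0 := by
            intro hzero
            rw [hzero, norm_zero] at h1
            linarith
          obtain ⟨g, hg1, hg2⟩ := exists_dual_vector ℝ (m₁ - l) (norm_ne_zero_iff.mpr hne)
          have hg2' : g (m₁ - l) = ‖m₁ - l‖ := by exact_mod_cast hg2
          have htd : Tendsto (fun n => g (x n)) atTop (nhds (g l)) := hweak g
          have htail : ∃ N₀, ∀ n, N₀ ≤ n → |g (x n) - g l| ≤ θ / 2 := by
            have := (Metric.tendsto_atTop.mp htd) (θ / 2) (by positivity)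
            obtain ⟨N₀, hN₀⟩ := this
            exact ⟨N₀, fun n hn => by
              have := hN₀ n hn
              rw [Real.dist_eq] at this
              linarith [this]⟩
          obtain ⟨N₀, hN₀⟩ := htail
          obtain ⟨m₂, hm₂tree, hm₂⟩ := ih (max N N₀)
          have hm₂tree' : dTree x k N m₂ := dTree_mono x k (le_max_left _ _) hm₂tree
          have hgm₂ : |g m₂ - g l| ≤ θ / 2 :=
            dTree_dual g k (fun i hi => hN₀ i (le_trans (le_max_right _ _) hi)) hm₂tree
          have hdiff : θ / 2 ≤ ‖m₁ - m₂‖ := by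
            have e1 : g m₁ - g m₂ = g (m₁ - l) - (g m₂ - g l) := by
              rw [map_sub]; ring
            have e2 : θ / 2 ≤ g m₁ - g m₂ := by
              rw [e1, hg2']
              have : g m₂ - g l ≤ θ / 2 := (abs_le.mp hgm₂).2
              linarith
            have e3 : g m₁ - g m₂ ≤ ‖m₁ - m₂‖ := by
              have e4 : g m₁ - g m₂ = g (m₁ - m₂) := by rw [map_sub]
              rw [e4]
              calc g (m₁ - m₂) ≤ |g (m₁ - m₂)| := le_abs_self _
                _ = ‖g (m₁ - m₂)‖ := rfl
                _ ≤ ‖g‖ * ‖m₁ - m₂‖ := g.le_opNorm _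
                _ = ‖m₁ - m₂‖ := by rw [hg1, one_mul]
            linarith
          set r : ℝ := kakSeq d θ δ₀ k with hrdef
          have hrpos : 0 < r := lt_of_lt_of_le hθ hck_ge
          have hx' : ‖r⁻¹ • (m₁ - l)‖ ≤ 1 := by
            rw [norm_smul, Real.norm_of_nonneg (by positivity : (0:ℝ) ≤ r⁻¹)]
            rw [← div_eq_inv_mul, div_le_one hrpos]
            exact hm₁
          have hy' : ‖r⁻¹ • (m₂ - l)‖ ≤ 1 := by
            rw [norm_smul, Real.norm_of_nonneg (by positivity : (0:ℝ) ≤ r⁻¹)]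
            rw [← div_eq_inv_mul, div_le_one hrpos]
            exact hm₂
          have hxy' : θ / (2 * d) ≤ ‖r⁻¹ • (m₁ - l) - r⁻¹ • (m₂ - l)‖ := by
            have e1 : r⁻¹ • (m₁ - l) - r⁻¹ • (m₂ - l) = r⁻¹ • (m₁ - m₂) := by module
            rw [e1, norm_smul, Real.norm_of_nonneg (by positivity : (0:ℝ) ≤ r⁻¹)]
            rw [← div_eq_inv_mul]
            rw [div_le_div_iff₀ (by positivity) hrpos]
            calc θ * r ≤ θ * d := by nlinarith
              _ ≤ ‖m₁ - m₂‖ * (2 * d) := by nlinarith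
          have hsum := hUC hx' hy' hxy'
          refine ⟨(2⁻¹ : ℝ) • m₁ + (2⁻¹ : ℝ) • m₂, ⟨m₁, m₂, hm₁tree, hm₂tree', rfl⟩, ?_⟩
          have e5 : ((2⁻¹ : ℝ) • m₁ + (2⁻¹ : ℝ) • m₂) - l
              = (2⁻¹ * r) • (r⁻¹ • (m₁ - l) + r⁻¹ • (m₂ - l)) := by
            have hsc : r⁻¹ * 2⁻¹ * r = 2⁻¹ := by
              field_simp
            rw [smul_add, smul_smul, smul_smul, mul_comm (2⁻¹ * r) r⁻¹, ← mul_assoc, hsc]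
            module
          rw [e5, norm_smul, Real.norm_of_nonneg (by positivity : (0:ℝ) ≤ 2⁻¹ * r)]
          refine le_trans ?_ (le_max_right _ _)
          calc 2⁻¹ * r * ‖r⁻¹ • (m₁ - l) + r⁻¹ • (m₂ - l)‖
              ≤ 2⁻¹ * r * (2 - δ₀) := by nlinarith [norm_nonneg (r⁻¹ • (m₁ - l) + r⁻¹ • (m₂ - l))]
            _ = r * (1 - δ₀ / 2) := by ring
  exact ⟨k₀, fun N => by
    obtain ⟨m, hm1, hm2⟩ := main k₀ N
    exact ⟨m, hm1, hm2.trans hk₀⟩⟩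

end Main

theorem demiclosedness_principle
    {E : Type*} [NormedAddCommGroup E] [NormedSpace ℝ E]
    [UniformConvexSpace E] [CompleteSpace E]
    (C : Set E) (hCne : C.Nonempty) (hCcl : IsClosed C) (hCcv : Convex ℝ C)
    (T : E → E) (hTmaps : Set.MapsTo T C C)
    (hT : ∀ x ∈ C, ∀ y ∈ C, ‖T x - T y‖ ≤ ‖x - y‖)
    (x : ℕ → E) (hxC : ∀ n, x n ∈ C) (l : E)
    (hweak : ∀ f : E →L[ℝ] ℝ, Tendsto (fun n => f (x n)) atTop (nhds (f l)))
    (hreg : Tendsto (fun n => ‖x n - T (x n)‖) atTop (nhds 0)) :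
    l ∈ C ∧ T l = l := by
  -- Step 1: `l ∈ C`, since a closed convex set is weakly closed.
  have hlC : l ∈ C := by
    by_contra hl
    obtain ⟨f, u, hfu, hul⟩ := geometric_hahn_banach_closed_point hCcv hCcl hl
    have h1 : ∀ n, f (x n) ≤ u := fun n => (hfu (x n) (hxC n)).le
    have h2 : f l ≤ u := le_of_tendsto (hweak f) (Eventually.of_forall h1)
    linarith
  -- Step 2: the sequence is bounded (Banach-Steinhaus through the double dual).
  obtain ⟨d, hdpos, hd⟩ : ∃ d : ℝ, 0 < d ∧ ∀ n, ‖x n - l‖ ≤ d := by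
    have hbs : ∃ C', ∀ n, ‖NormedSpace.inclusionInDoubleDual ℝ E (x n)‖ ≤ C' := by
      apply banach_steinhaus
      intro f
      have ht : Tendsto (fun n => |f (x n)|) atTop (nhds |f l|) := (hweak f).abs
      obtain ⟨c, hc⟩ := ht.bddAbove_range
      refine ⟨c, fun n => ?_⟩
      have h1 : |f (x n)| ≤ c := hc (Set.mem_range_self n)
      simpa [NormedSpace.dual_def, Real.norm_eq_abs] using h1
    obtain ⟨C', hC'⟩ := hbs
    have hxb : ∀ n, ‖x n‖ ≤ C' := by
      intro n
      have h3 : ‖(NormedSpace.inclusionInDoubleDualLi ℝ (E := E)) (x n)‖ = ‖x n‖ :=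
        (NormedSpace.inclusionInDoubleDualLi ℝ (E := E)).norm_map (x n)
      have h4 : (NormedSpace.inclusionInDoubleDualLi ℝ (E := E)) (x n)
          = NormedSpace.inclusionInDoubleDual ℝ E (x n) := rfl
      rw [← h3, h4]
      exact hC' n
    have h0 : (0:ℝ) ≤ C' := le_trans (norm_nonneg _) (hxb 0)
    refine ⟨C' + ‖l‖ + 1, by positivity, fun n => ?_⟩
    calc ‖x n - l‖ ≤ ‖x n‖ + ‖l‖ := norm_sub_le _ _
      _ ≤ C' + ‖l‖ + 1 := by linarith [hxb n]
  -- tails of the displacement sequence are uniformly small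
  have htail : ∀ β : ℝ, 0 < β → ∃ N, ∀ n, N ≤ n → ‖x n - T (x n)‖ ≤ β := by
    intro β hβ
    obtain ⟨N, hN⟩ := (Metric.tendsto_atTop.mp hreg) β hβ
    refine ⟨N, fun n hn => ?_⟩
    have := hN n hn
    rw [Real.dist_eq, sub_zero, abs_of_nonneg (norm_nonneg _)] at this
    linarith
  -- Step 3: `T l = l`.
  have key : ∀ ζ : ℝ, 0 < ζ → ‖l - T l‖ ≤ 3 * ζ := by
    intro ζ hζ
    have hm : ∃ m, m ∈ C ∧ ‖m - l‖ ≤ ζ ∧ ‖m - T m‖ ≤ ζ := by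
      by_cases hcase : d ≤ ζ
      · -- the whole sequence is already `ζ`-close to `l`
        obtain ⟨N, hN⟩ := htail ζ hζ
        exact ⟨x N, hxC N, (hd N).trans hcase, hN N le_rfl⟩
      · push_neg at hcase
        have hθpos : 0 < ζ / 2 := by positivity
        have hθd : 2 * (ζ / 2) < d := by linarith
        obtain ⟨k, hk⟩ := kak_main hweak hd hdpos hθpos hθd
        obtain ⟨β, hβpos, hdisp⟩ := dTree_displacement hT hCcv hxC hd hdpos k ζ hζ
        obtain ⟨N, hN⟩ := htail β hβpos
        obtain ⟨m, hmtree, hmnear⟩ := hk N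
        refine ⟨m, dTree_mem hCcv hxC k hmtree, ?_, hdisp N m hN hmtree⟩
        calc ‖m - l‖ ≤ 2 * (ζ / 2) := hmnear
          _ = ζ := by ring
    obtain ⟨m, hmC, hm1, hm2⟩ := hm
    have hTm : ‖T m - T l‖ ≤ ‖m - l‖ := hT m hmC l hlC
    calc ‖l - T l‖ = ‖((l - m) + (m - T m)) + (T m - T l)‖ := by
          congr 1; abel
      _ ≤ ‖(l - m) + (m - T m)‖ + ‖T m - T l‖ := norm_add_le _ _
      _ ≤ (‖l - m‖ + ‖m - T m‖) + ‖T m - T l‖ := by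
          gcongr; exact norm_add_le _ _
      _ ≤ (ζ + ζ) + ζ := by
          have e1 : ‖l - m‖ ≤ ζ := by rw [norm_sub_rev]; exact hm1
          exact add_le_add (add_le_add e1 hm2) (hTm.trans hm1)
      _ = 3 * ζ := by ring
  have hle : ‖l - T l‖ ≤ 0 := by
    apply le_of_forall_pos_le_add
    intro ε hε
    calc ‖l - T l‖ ≤ 3 * (ε / 3) := key (ε / 3) (by positivity)
      _ = 0 + ε := by ring
  have h0 : l - T l = 0 := norm_eq_zero.mp (le_antisymm hle (norm_nonneg _))
  exact ⟨hlC, (sub_eq_zero.mp h0).symm⟩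
end

section
/- Let E be a uniformly convex Banach space, C ⊆ E nonempty closed convex, T : C → C nonexpansive with F(T) ≠ ∅, and x_n given by x_{n+1} = T y_n, y_n = (1-α_n) z_n + α_n T z_n, z_n = (1-β_n) x_n + β_n T x_n with α_n, β_n bounded away from 0 and 1. If T satisfies Condition (A), i.e., there is a nondecreasing f : [0,∞) → [0,∞) with f(0) = 0 and f(r) > 0 for r > 0 such that ‖x - Tx‖ ≥ f(d(x, F(T))) for all x ∈ C, then x_n converges strongly to a fixed point of T. -/
open Filter

theorem strong_convergence_condition_A
    {E : Type*} [NormedAddCommGroup E] [NormedSpace ℝ E]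
    [UniformConvexSpace E] [CompleteSpace E]
    (C : Set E) (hCne : C.Nonempty) (hCcl : IsClosed C) (hCcv : Convex ℝ C)
    (T : E → E) (hTmaps : Set.MapsTo T C C)
    (hT : ∀ x ∈ C, ∀ y ∈ C, ‖T x - T y‖ ≤ ‖x - y‖)
    (F : Set E) (hFdef : F = {p ∈ C | T p = p}) (hFne : F.Nonempty)
    (a b : ℝ) (ha : 0 < a) (hb : b < 1)
    (α β : ℕ → ℝ)
    (hα : ∀ n, a ≤ α n ∧ α n ≤ b) (hβ : ∀ n, a ≤ β n ∧ β n ≤ b)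
    (x y z : ℕ → E) (hx0 : x 0 ∈ C)
    (hz : ∀ n, z n = (1 - β n) • x n + β n • T (x n))
    (hy : ∀ n, y n = (1 - α n) • z n + α n • T (z n))
    (hx : ∀ n, x (n + 1) = T (y n))
    (f : ℝ → ℝ) (hfmono : ∀ r s, 0 ≤ r → r ≤ s → f r ≤ f s)
    (hf0 : f 0 = 0) (hfpos : ∀ r : ℝ, 0 < r → 0 < f r)
    (hcondA : ∀ w ∈ C, f (Metric.infDist w F) ≤ ‖w - T w‖) :
    ∃ q ∈ F, Tendsto x atTop (nhds q) := by
  obtain ⟨p, hpF⟩ := hFne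
  have hpC : p ∈ C := by rw [hFdef] at hpF; exact hpF.1
  have hTp : T p = p := by rw [hFdef] at hpF; exact hpF.2
  -- membership in C
  have hxC : ∀ n, x n ∈ C := by
    intro n
    induction n with
    | zero => exact hx0
    | succ n ih =>
      have hzC : z n ∈ C := by
        rw [hz n]
        exact hCcv ih (hTmaps ih) (by linarith [(hβ n).2]) (by linarith [(hβ n).1])
          (by ring)
      have hyC : y n ∈ C := by
        rw [hy n]
        exact hCcv hzC (hTmaps hzC) (by linarith [(hα n).2]) (by linarith [(hα n).1])
          (by ring)
      rw [hx n]; exact hTmaps hyC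
  have hzC : ∀ n, z n ∈ C := by
    intro n
    rw [hz n]
    exact hCcv (hxC n) (hTmaps (hxC n)) (by linarith [(hβ n).2]) (by linarith [(hβ n).1])
      (by ring)
  have hyC : ∀ n, y n ∈ C := by
    intro n
    rw [hy n]
    exact hCcv (hzC n) (hTmaps (hzC n)) (by linarith [(hα n).2]) (by linarith [(hα n).1])
      (by ring)
  -- convex combination norm bound
  have hnb : ∀ (t : ℝ), 0 ≤ t → t ≤ 1 → ∀ (w1 w2 : E) (r : ℝ), ‖w1‖ ≤ r → ‖w2‖ ≤ r →
      ‖(1 - t) • w1 + t • w2‖ ≤ r := by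
    intro t ht0 ht1 w1 w2 r h1 h2
    calc ‖(1 - t) • w1 + t • w2‖ ≤ ‖(1 - t) • w1‖ + ‖t • w2‖ := norm_add_le _ _
      _ = (1 - t) * ‖w1‖ + t * ‖w2‖ := by
          rw [norm_smul, norm_smul, Real.norm_of_nonneg ht0,
            Real.norm_of_nonneg (by linarith : (0:ℝ) ≤ 1 - t)]
      _ ≤ (1 - t) * r + t * r := by
          apply add_le_add
          · exact mul_le_mul_of_nonneg_left h1 (by linarith)
          · exact mul_le_mul_of_nonneg_left h2 ht0
      _ = r := by ring
  -- Fejér monotonicity pieces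
  have hstep : ∀ q ∈ F, ∀ n, ‖x (n + 1) - q‖ ≤ ‖z n - q‖ ∧ ‖z n - q‖ ≤ ‖x n - q‖ := by
    intro q hq n
    have hqC : q ∈ C := by rw [hFdef] at hq; exact hq.1
    have hTq : T q = q := by rw [hFdef] at hq; exact hq.2
    have hzq : ‖z n - q‖ ≤ ‖x n - q‖ := by
      have : z n - q = (1 - β n) • (x n - q) + β n • (T (x n) - q) := by
        rw [hz n]; module
      rw [this]
      apply hnb (β n) (by linarith [(hβ n).1]) (by linarith [(hβ n).2]) _ _ _ le_rfl
      calc ‖T (x n) - q‖ = ‖T (x n) - T q‖ := by rw [hTq]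
        _ ≤ ‖x n - q‖ := hT _ (hxC n) _ hqC
    have hyq : ‖y n - q‖ ≤ ‖z n - q‖ := by
      have : y n - q = (1 - α n) • (z n - q) + α n • (T (z n) - q) := by
        rw [hy n]; module
      rw [this]
      apply hnb (α n) (by linarith [(hα n).1]) (by linarith [(hα n).2]) _ _ _ le_rfl
      calc ‖T (z n) - q‖ = ‖T (z n) - T q‖ := by rw [hTq]
        _ ≤ ‖z n - q‖ := hT _ (hzC n) _ hqC
    refine ⟨?_, hzq⟩
    calc ‖x (n + 1) - q‖ = ‖T (y n) - T q‖ := by rw [hx n, hTq]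
      _ ≤ ‖y n - q‖ := hT _ (hyC n) _ hqC
      _ ≤ ‖z n - q‖ := hyq
  have hmono : ∀ q ∈ F, ∀ m n, m ≤ n → ‖x n - q‖ ≤ ‖x m - q‖ := by
    intro q hq m n hmn
    induction n, hmn using Nat.le_induction with
    | base => exact le_rfl
    | succ n hmn ih =>
      exact le_trans (le_trans (hstep q hq n).1 (hstep q hq n).2) ih
  -- key claim: the displacement gets arbitrarily small
  have hsmall : ∀ ε : ℝ, 0 < ε → ∀ N : ℕ, ∃ n, N ≤ n ∧ ‖x n - T (x n)‖ < ε := by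
    intro ε hε N
    by_contra hcon
    push_neg at hcon
    have hrlow : ∀ n, N ≤ n → ε / 2 ≤ ‖x n - p‖ := by
      intro n hn
      have h1 : ‖x n - T (x n)‖ ≤ 2 * ‖x n - p‖ := by
        have e : x n - T (x n) = (x n - p) + (p - T (x n)) := by abel
        have h2 : ‖p - T (x n)‖ = ‖T p - T (x n)‖ := by rw [hTp]
        have h3 : ‖T p - T (x n)‖ ≤ ‖p - x n‖ := hT _ hpC _ (hxC n)
        have h4 : ‖p - x n‖ = ‖x n - p‖ := norm_sub_rev _ _
        calc ‖x n - T (x n)‖ ≤ ‖x n - p‖ + ‖p - T (x n)‖ := by rw [e]; exact norm_add_le _ _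
          _ ≤ 2 * ‖x n - p‖ := by rw [h2]; linarith [h3, h4.le, h4.ge]
      linarith [hcon n hn]
    set R := ‖x N - p‖ with hR
    have hRpos : 0 < R := lt_of_lt_of_le (half_pos hε) (hrlow N le_rfl)
    obtain ⟨δ, hδ, hball⟩ :=
      exists_forall_closed_ball_dist_add_le_two_sub E (div_pos hε hRpos)
    set m : ℝ := min a (1 - b) with hm
    have hmpos : 0 < m := lt_min ha (by linarith)
    set γ : ℝ := m * δ * (ε / 2) with hγdef
    have hγ : 0 < γ := by positivity
    have hdec : ∀ n, N ≤ n → ‖x (n + 1) - p‖ ≤ ‖x n - p‖ - γ := by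
      intro n hn
      set rn := ‖x n - p‖ with hrn
      have hrnpos : 0 < rn := lt_of_lt_of_le (half_pos hε) (hrlow n hn)
      have hrnR : rn ≤ R := hmono p hpF N n hn
      set u := x n - p with hu
      set v := T (x n) - p with hv
      have hvle : ‖v‖ ≤ rn := by
        calc ‖v‖ = ‖T (x n) - T p‖ := by rw [hv, hTp]
          _ ≤ ‖x n - p‖ := hT _ (hxC n) _ hpC
      have huv : u - v = x n - T (x n) := by rw [hu, hv]; abel
      have hu1 : ‖rn⁻¹ • u‖ ≤ 1 := by
        rw [norm_smul, Real.norm_of_nonneg (inv_nonneg.2 hrnpos.le)]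
        exact le_of_eq (inv_mul_cancel₀ hrnpos.ne')
      have hv1 : ‖rn⁻¹ • v‖ ≤ 1 := by
        rw [norm_smul, Real.norm_of_nonneg (inv_nonneg.2 hrnpos.le)]
        calc rn⁻¹ * ‖v‖ ≤ rn⁻¹ * rn := by
              exact mul_le_mul_of_nonneg_left hvle (inv_nonneg.2 hrnpos.le)
          _ = 1 := inv_mul_cancel₀ hrnpos.ne'
      have hsep : ε / R ≤ ‖rn⁻¹ • u - rn⁻¹ • v‖ := by
        rw [← smul_sub, norm_smul, Real.norm_of_nonneg (inv_nonneg.2 hrnpos.le), huv]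
        have h1 : ε / R ≤ ε / rn := by gcongr
        have h2 : ε / rn ≤ ‖x n - T (x n)‖ / rn := by gcongr; exact hcon n hn
        calc ε / R ≤ ‖x n - T (x n)‖ / rn := le_trans h1 h2
          _ = rn⁻¹ * ‖x n - T (x n)‖ := by rw [div_eq_inv_mul]
      have hsum : ‖u + v‖ ≤ (2 - δ) * rn := by
        have := hball hu1 hv1 hsep
        rw [← smul_add, norm_smul, Real.norm_of_nonneg (inv_nonneg.2 hrnpos.le),
          ← div_eq_inv_mul, div_le_iff₀ hrnpos] at this
        linarith
      set m' : ℝ := min (β n) (1 - β n) with hm'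
      have hmm' : m ≤ m' := le_min (le_trans (min_le_left _ _) (hβ n).1)
        (le_trans (min_le_right _ _) (by linarith [(hβ n).2]))
      have hm'1 : m' ≤ β n := min_le_left _ _
      have hm'2 : m' ≤ 1 - β n := min_le_right _ _
      have hm'0 : 0 ≤ m' := le_trans hmpos.le hmm'
      have hdecomp : z n - p = (1 - β n - m') • u + (β n - m') • v + m' • (u + v) := by
        rw [hz n, hu, hv]; module
      have hzb : ‖z n - p‖ ≤ rn - m' * δ * rn := by
        rw [hdecomp]
        calc ‖(1 - β n - m') • u + (β n - m') • v + m' • (u + v)‖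
            ≤ ‖(1 - β n - m') • u‖ + ‖(β n - m') • v‖ + ‖m' • (u + v)‖ := norm_add₃_le
          _ = (1 - β n - m') * ‖u‖ + (β n - m') * ‖v‖ + m' * ‖u + v‖ := by
              rw [norm_smul, norm_smul, norm_smul,
                Real.norm_of_nonneg (by linarith : (0:ℝ) ≤ 1 - β n - m'),
                Real.norm_of_nonneg (by linarith : (0:ℝ) ≤ β n - m'),
                Real.norm_of_nonneg hm'0]
          _ ≤ (1 - β n - m') * rn + (β n - m') * rn + m' * ((2 - δ) * rn) := by
              apply add_le_add (add_le_add ?_ ?_) ?_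
              · exact mul_le_mul_of_nonneg_left le_rfl (by linarith)
              · exact mul_le_mul_of_nonneg_left hvle (by linarith)
              · exact mul_le_mul_of_nonneg_left hsum hm'0
          _ = rn - m' * δ * rn := by ring
      have hfin : ‖x (n + 1) - p‖ ≤ ‖z n - p‖ := (hstep p hpF n).1
      have hεrn : ε / 2 ≤ rn := hrlow n hn
      have : m * δ * (ε / 2) ≤ m' * δ * rn := by
        apply mul_le_mul (mul_le_mul hmm' le_rfl hδ.le hm'0) hεrn (by positivity)
          (by positivity)
      calc ‖x (n + 1) - p‖ ≤ rn - m' * δ * rn := le_trans hfin hzb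
        _ ≤ rn - γ := by rw [hγdef]; linarith
    have hiter : ∀ k : ℕ, ‖x (N + k) - p‖ ≤ R - k * γ := by
      intro k
      induction k with
      | zero => simp [hR]
      | succ k ih =>
        have := hdec (N + k) (Nat.le_add_right _ _)
        have e : N + (k + 1) = (N + k) + 1 := by ring
        rw [e]
        push_cast
        linarith
    obtain ⟨k, hk⟩ := exists_nat_gt (R / γ)
    have hk' : R < k * γ := by rwa [div_lt_iff₀ hγ] at hk
    linarith [norm_nonneg (x (N + k) - p), hiter k]
  -- infDist is nonincreasing
  have hFne' : F.Nonempty := ⟨p, hpF⟩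
  have hdanti : ∀ n, Metric.infDist (x (n + 1)) F ≤ Metric.infDist (x n) F := by
    intro n
    by_contra h
    push_neg at h
    obtain ⟨q, hqF, hq⟩ := (Metric.infDist_lt_iff hFne').1 h
    have h1 : Metric.infDist (x (n + 1)) F ≤ dist (x (n + 1)) q :=
      Metric.infDist_le_dist_of_mem hqF
    have h2 : dist (x (n + 1)) q ≤ dist (x n) q := by
      rw [dist_eq_norm, dist_eq_norm]
      exact le_trans (hstep q hqF n).1 (hstep q hqF n).2
    linarith
  have hdmono : ∀ m n, m ≤ n → Metric.infDist (x n) F ≤ Metric.infDist (x m) F := by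
    intro m n hmn
    induction n, hmn using Nat.le_induction with
    | base => exact le_rfl
    | succ n hmn ih => exact le_trans (hdanti n) ih
  -- infDist tends to zero
  have hdto : ∀ ε : ℝ, 0 < ε → ∃ N, ∀ n, N ≤ n → Metric.infDist (x n) F < ε := by
    intro ε hε
    by_contra h
    push_neg at h
    have hall : ∀ N : ℕ, ε ≤ Metric.infDist (x N) F := by
      intro N
      obtain ⟨n, hn, hεd⟩ := h N
      exact le_trans hεd (hdmono N n hn)
    obtain ⟨n, _, hlt⟩ := hsmall (f ε) (hfpos ε hε) 0
    have h1 : f ε ≤ f (Metric.infDist (x n) F) := hfmono _ _ hε.le (hall n)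
    have h2 : f (Metric.infDist (x n) F) ≤ ‖x n - T (x n)‖ := hcondA _ (hxC n)
    linarith
  -- Cauchy sequence
  have hcauchy : CauchySeq x := by
    rw [Metric.cauchySeq_iff]
    intro ε hε
    obtain ⟨N, hN⟩ := hdto (ε / 3) (by positivity)
    obtain ⟨q, hqF, hq⟩ := (Metric.infDist_lt_iff hFne').1 (hN N le_rfl)
    refine ⟨N, fun m hm n hn => ?_⟩
    have h1 : dist (x m) q ≤ dist (x N) q := by
      rw [dist_eq_norm, dist_eq_norm]; exact hmono q hqF N m hm
    have h2 : dist (x n) q ≤ dist (x N) q := by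
      rw [dist_eq_norm, dist_eq_norm]; exact hmono q hqF N n hn
    calc dist (x m) (x n) ≤ dist (x m) q + dist q (x n) := dist_triangle _ _ _
      _ = dist (x m) q + dist (x n) q := by rw [dist_comm q]
      _ < ε := by linarith
  obtain ⟨q, hq⟩ := cauchySeq_tendsto_of_complete hcauchy
  have hqC : q ∈ C := hCcl.mem_of_tendsto hq (Eventually.of_forall hxC)
  have hkey : ∀ ε : ℝ, 0 < ε → ‖q - T q‖ < ε := by
    intro ε hε
    obtain ⟨N, hN⟩ := hdto (ε / 5) (by positivity)
    obtain ⟨N', hN'⟩ := (Metric.tendsto_atTop.1 hq) (ε / 5) (by positivity)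
    set n := max N N'
    have hd1 : Metric.infDist (x n) F < ε / 5 := hN n (le_max_left _ _)
    have hd2 : dist (x n) q < ε / 5 := hN' n (le_max_right _ _)
    obtain ⟨p', hp'F, hp'⟩ := (Metric.infDist_lt_iff hFne').1 hd1
    have hp'C : p' ∈ C := by rw [hFdef] at hp'F; exact hp'F.1
    have hTp' : T p' = p' := by rw [hFdef] at hp'F; exact hp'F.2
    have hqp' : dist q p' < 2 * (ε / 5) := by
      calc dist q p' ≤ dist q (x n) + dist (x n) p' := dist_triangle _ _ _
        _ < 2 * (ε / 5) := by rw [dist_comm q]; linarith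
    have h1 : ‖q - T q‖ ≤ ‖q - p'‖ + ‖p' - T q‖ := by
      have e : q - T q = (q - p') + (p' - T q) := by abel
      rw [e]; exact norm_add_le _ _
    have h2 : ‖p' - T q‖ = ‖T p' - T q‖ := by rw [hTp']
    have h3 : ‖T p' - T q‖ ≤ ‖p' - q‖ := hT _ hp'C _ hqC
    have h4 : ‖p' - q‖ = ‖q - p'‖ := norm_sub_rev _ _
    have h5 : ‖q - p'‖ = dist q p' := (dist_eq_norm _ _).symm
    calc ‖q - T q‖ ≤ ‖q - p'‖ + ‖p' - T q‖ := h1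
      _ ≤ 2 * dist q p' := by rw [h2] at *; linarith [h3, h4, h5.le, h5.ge]
      _ < 4 * (ε / 5) := by linarith
      _ < ε := by linarith
  have hTq : T q = q := by
    have h0 : ‖q - T q‖ = 0 := by
      by_contra h
      have hpos : 0 < ‖q - T q‖ := lt_of_le_of_ne (norm_nonneg _) (Ne.symm h)
      exact lt_irrefl _ (hkey _ hpos)
    have := sub_eq_zero.1 (norm_eq_zero.1 h0)
    exact this.symm
  refine ⟨q, ?_, hq⟩
  rw [hFdef]
  exact ⟨hqC, hTq⟩
end

section
/- Let T be an L-contraction (0 < L < 1) of a nonempty closed convex subset C of a Banach space into itself with fixed point p. Then the iteration x_{n+1} = T y_n, y_n = (1-α_n) z_n + α_n T z_n, z_n = (1-β_n) x_n + β_n T x_n with α_n, β_n ∈ (0,1) converges strongly to p, with ‖x_n - p‖ ≤ L^{n-1} ‖x_1 - p‖. -/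
open Filter

theorem three_step_iteration_strong_convergence
    {E : Type*} [NormedAddCommGroup E] [NormedSpace ℝ E] [CompleteSpace E]
    (C : Set E) (hCne : C.Nonempty) (hCcl : IsClosed C) (hCcv : Convex ℝ C)
    (T : E → E) (hTmaps : Set.MapsTo T C C)
    (L : ℝ) (hL0 : 0 < L) (hL1 : L < 1)
    (hT : ∀ x ∈ C, ∀ y ∈ C, ‖T x - T y‖ ≤ L * ‖x - y‖)
    (p : E) (hpC : p ∈ C) (hp : T p = p)
    (α β : ℕ → ℝ)
    (hα : ∀ n, 0 < α n ∧ α n < 1) (hβ : ∀ n, 0 < β n ∧ β n < 1)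
    (x y z : ℕ → E) (hx0 : x 0 ∈ C)
    (hz : ∀ n, z n = (1 - β n) • x n + β n • T (x n))
    (hy : ∀ n, y n = (1 - α n) • z n + α n • T (z n))
    (hx : ∀ n, x (n + 1) = T (y n)) :
    (∀ n, ‖x n - p‖ ≤ L ^ n * ‖x 0 - p‖) ∧ Tendsto x atTop (nhds p) := by
  -- key lemma: convex combination step does not increase distance to p
  have key : ∀ (c : ℝ), 0 ≤ c → c ≤ 1 → ∀ w ∈ C,
      ‖(1 - c) • w + c • T w - p‖ ≤ ‖w - p‖ := by
    intro c hc0 hc1 w hw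
    have hTw : ‖T w - p‖ ≤ ‖w - p‖ := by
      calc ‖T w - p‖ = ‖T w - T p‖ := by rw [hp]
        _ ≤ L * ‖w - p‖ := hT w hw p hpC
        _ ≤ 1 * ‖w - p‖ := by
            exact mul_le_mul_of_nonneg_right hL1.le (norm_nonneg _)
        _ = ‖w - p‖ := one_mul _
    have heq : (1 - c) • w + c • T w - p = (1 - c) • (w - p) + c • (T w - p) := by
      module
    rw [heq]
    calc ‖(1 - c) • (w - p) + c • (T w - p)‖
        ≤ ‖(1 - c) • (w - p)‖ + ‖c • (T w - p)‖ := norm_add_le _ _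
      _ = (1 - c) * ‖w - p‖ + c * ‖T w - p‖ := by
          rw [norm_smul, norm_smul, Real.norm_of_nonneg (by linarith),
            Real.norm_of_nonneg hc0]
      _ ≤ (1 - c) * ‖w - p‖ + c * ‖w - p‖ := by
          exact add_le_add_right (mul_le_mul_of_nonneg_left hTw hc0) _
      _ = ‖w - p‖ := by ring
  have mem : ∀ (c : ℝ), 0 ≤ c → c ≤ 1 → ∀ w ∈ C, (1 - c) • w + c • T w ∈ C := by
    intro c hc0 hc1 w hw
    exact hCcv hw (hTmaps hw) (by linarith) hc0 (by ring)
  have main : ∀ n, x n ∈ C ∧ ‖x n - p‖ ≤ L ^ n * ‖x 0 - p‖ := by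
    intro n
    induction n with
    | zero => exact ⟨hx0, by simp⟩
    | succ n ih =>
      obtain ⟨hxC, hxb⟩ := ih
      have hzC : z n ∈ C := by rw [hz n]; exact mem _ (hβ n).1.le (hβ n).2.le _ hxC
      have hzb : ‖z n - p‖ ≤ ‖x n - p‖ := by
        rw [hz n]; exact key _ (hβ n).1.le (hβ n).2.le _ hxC
      have hyC : y n ∈ C := by rw [hy n]; exact mem _ (hα n).1.le (hα n).2.le _ hzC
      have hyb : ‖y n - p‖ ≤ ‖z n - p‖ := by
        rw [hy n]; exact key _ (hα n).1.le (hα n).2.le _ hzC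
      refine ⟨by rw [hx n]; exact hTmaps hyC, ?_⟩
      calc ‖x (n + 1) - p‖ = ‖T (y n) - T p‖ := by rw [hx n, hp]
        _ ≤ L * ‖y n - p‖ := hT _ hyC _ hpC
        _ ≤ L * ‖x n - p‖ := by
            exact mul_le_mul_of_nonneg_left (hyb.trans hzb) hL0.le
        _ ≤ L * (L ^ n * ‖x 0 - p‖) := mul_le_mul_of_nonneg_left hxb hL0.le
        _ = L ^ (n + 1) * ‖x 0 - p‖ := by ring
  refine ⟨fun n => (main n).2, ?_⟩
  rw [tendsto_iff_norm_sub_tendsto_zero]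
  have hgeo : Tendsto (fun n => L ^ n * ‖x 0 - p‖) atTop (nhds 0) := by
    have := tendsto_pow_atTop_nhds_zero_of_lt_one hL0.le hL1
    simpa using this.mul_const ‖x 0 - p‖
  exact squeeze_zero (fun n => norm_nonneg _) (fun n => (main n).2) hgeo
end
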